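/- The five holomorphic vector fields on ℂ³ given by e1 = (1,0,0), e2 = (2z1, −z2, w), e3 = (−z1², z1 z2 − w, −z1 w), e4 = (0, 1, z1), e5 = (0, 0, 1) satisfy the commutation relations of the unique non-solvable indecomposable 5-dimensional real Lie algebra g₅: [e1,e2] = 2e1, [e1,e3] = −e2, [e1,e4] = e5, [e1,e5] = 0, [e2,e3] = 2e3, [e2,e4] = e4, [e2,e5] = −e5, [e3,e4] = 0, [e3,e5] = e4, [e4,e5] = 0. -/

import Mathlib

open Complex

/-- Lie bracket of holomorphic vector fields on `ℂ³`, viewed as maps `ℂ³ → ℂ³`. -/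
noncomputable def lieBrk (X Y : ℂ × ℂ × ℂ → ℂ × ℂ × ℂ) (p : ℂ × ℂ × ℂ) : ℂ × ℂ × ℂ :=
  fderiv ℂ Y p (X p) - fderiv ℂ X p (Y p)

def e1 : ℂ × ℂ × ℂ → ℂ × ℂ × ℂ := fun _ => (1, 0, 0)
def e2 : ℂ × ℂ × ℂ → ℂ × ℂ × ℂ := fun p => (2 * p.1, -p.2.1, p.2.2)
def e3 : ℂ × ℂ × ℂ → ℂ × ℂ × ℂ := fun p => (-(p.1 ^ 2), p.1 * p.2.1 - p.2.2, -(p.1 * p.2.2))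
def e4 : ℂ × ℂ × ℂ → ℂ × ℂ × ℂ := fun p => (0, 1, p.1)
def e5 : ℂ × ℂ × ℂ → ℂ × ℂ × ℂ := fun _ => (0, 0, 1)

noncomputable def π1 : (ℂ × ℂ × ℂ) →L[ℂ] ℂ := ContinuousLinearMap.fst ℂ ℂ (ℂ × ℂ)
noncomputable def π2 : (ℂ × ℂ × ℂ) →L[ℂ] ℂ :=
  (ContinuousLinearMap.fst ℂ ℂ ℂ).comp (ContinuousLinearMap.snd ℂ ℂ (ℂ × ℂ))
noncomputable def π3 : (ℂ × ℂ × ℂ) →L[ℂ] ℂ :=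
  (ContinuousLinearMap.snd ℂ ℂ ℂ).comp (ContinuousLinearMap.snd ℂ ℂ (ℂ × ℂ))

@[simp] lemma π1_apply (v : ℂ × ℂ × ℂ) : π1 v = v.1 := rfl
@[simp] lemma π2_apply (v : ℂ × ℂ × ℂ) : π2 v = v.2.1 := rfl
@[simp] lemma π3_apply (v : ℂ × ℂ × ℂ) : π3 v = v.2.2 := rfl

lemma hp1 (p : ℂ × ℂ × ℂ) : HasFDerivAt (fun q : ℂ × ℂ × ℂ => q.1) π1 p :=
  hasFDerivAt_fst
lemma hp2 (p : ℂ × ℂ × ℂ) : HasFDerivAt (fun q : ℂ × ℂ × ℂ => q.2.1) π2 p :=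
  (hasFDerivAt_snd).fst
lemma hp3 (p : ℂ × ℂ × ℂ) : HasFDerivAt (fun q : ℂ × ℂ × ℂ => q.2.2) π3 p :=
  (hasFDerivAt_snd).snd

lemma hd1 (p : ℂ × ℂ × ℂ) :
    HasFDerivAt e1 (0 : (ℂ × ℂ × ℂ) →L[ℂ] (ℂ × ℂ × ℂ)) p := hasFDerivAt_const _ _

lemma hd2 (p : ℂ × ℂ × ℂ) :
    HasFDerivAt e2 (((2:ℂ) • π1).prod ((-π2).prod π3)) p := by
  exact (HasFDerivAt.prodMk ((hp1 p).const_mul 2) (HasFDerivAt.prodMk ((hp2 p).neg) (hp3 p)))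

lemma hd3 (p : ℂ × ℂ × ℂ) :
    HasFDerivAt e3
      ((-(p.1 • π1 + p.1 • π1)).prod
        (((p.1 • π2 + p.2.1 • π1) - π3).prod (-(p.1 • π3 + p.2.2 • π1)))) p := by
  have h1 : HasFDerivAt (fun q : ℂ × ℂ × ℂ => -(q.1 ^ 2)) (-(p.1 • π1 + p.1 • π1)) p := by
    simp only [pow_two]; exact ((hp1 p).mul (hp1 p)).neg
  have h2 : HasFDerivAt (fun q : ℂ × ℂ × ℂ => q.1 * q.2.1 - q.2.2)
      ((p.1 • π2 + p.2.1 • π1) - π3) p := ((hp1 p).mul (hp2 p)).sub (hp3 p)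
  have h3 : HasFDerivAt (fun q : ℂ × ℂ × ℂ => -(q.1 * q.2.2))
      (-(p.1 • π3 + p.2.2 • π1)) p := ((hp1 p).mul (hp3 p)).neg
  exact HasFDerivAt.prodMk h1 (HasFDerivAt.prodMk h2 h3)

lemma hd4 (p : ℂ × ℂ × ℂ) :
    HasFDerivAt e4 ((0 : (ℂ × ℂ × ℂ) →L[ℂ] ℂ).prod
      ((0 : (ℂ × ℂ × ℂ) →L[ℂ] ℂ).prod π1)) p :=
  HasFDerivAt.prodMk (hasFDerivAt_const _ _) (HasFDerivAt.prodMk (hasFDerivAt_const _ _) (hp1 p))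

lemma hd5 (p : ℂ × ℂ × ℂ) :
    HasFDerivAt e5 (0 : (ℂ × ℂ × ℂ) →L[ℂ] (ℂ × ℂ × ℂ)) p := hasFDerivAt_const _ _

/-- The fields `e1,…,e5` realize the non-solvable indecomposable 5-dimensional
Lie algebra `g₅` in `ℂ³`. -/
theorem stmt3 :
    (∀ p, lieBrk e1 e2 p = (2 : ℂ) • e1 p) ∧
    (∀ p, lieBrk e1 e3 p = - e2 p) ∧
    (∀ p, lieBrk e1 e4 p = e5 p) ∧
    (∀ p, lieBrk e1 e5 p = 0) ∧
    (∀ p, lieBrk e2 e3 p = (2 : ℂ) • e3 p) ∧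
    (∀ p, lieBrk e2 e4 p = e4 p) ∧
    (∀ p, lieBrk e2 e5 p = - e5 p) ∧
    (∀ p, lieBrk e3 e4 p = 0) ∧
    (∀ p, lieBrk e3 e5 p = e4 p) ∧
    (∀ p, lieBrk e4 e5 p = 0) := by
  refine ⟨?_, ?_, ?_, ?_, ?_, ?_, ?_, ?_, ?_, ?_⟩ <;> intro p <;>
    simp only [lieBrk, (hd1 p).fderiv, (hd2 p).fderiv, (hd3 p).fderiv, (hd4 p).fderiv,
      (hd5 p).fderiv, e1, e2, e3, e4, e5] <;>
    refine Prod.ext ?_ (Prod.ext ?_ ?_) <;>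
    simp [π1, π2, π3, ContinuousLinearMap.prod_apply, ContinuousLinearMap.add_apply,
      ContinuousLinearMap.sub_apply, ContinuousLinearMap.neg_apply,
      ContinuousLinearMap.smul_apply, ContinuousLinearMap.zero_apply, smul_eq_mul,
      Prod.fst_sub, Prod.snd_sub] <;>
    ring_nf
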